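/- Let s ≥ 1, t ≥ 1 and λ ≥ 0 be natural numbers and set θ = t·s + λ. Then the set of important powers P₁ = {(s−1) + s·i + θ·l : 0 ≤ i,l ≤ t−1} is disjoint from the set of garbage powers P₂ = {j + s·i + (s−1−k) + θ·l : 0 ≤ i,l ≤ t−1, 0 ≤ j,k ≤ s−1, j ≠ k}. Hence Y = A^T B is decodable from C_A(x)·C_B(x) for AGE codes. -/
import Mathlib


/-- For s ≥ 1, t ≥ 1, λ ≥ 0 and θ = t·s + λ, the set of
important powers P₁ = {(s−1) + s·i + θ·l : 0 ≤ i,l ≤ t−1} is disjoint from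
the set of garbage powers
P₂ = {j + s·i + (s−1−k) + θ·l : 0 ≤ i,l ≤ t−1, 0 ≤ j,k ≤ s−1, j ≠ k};
hence Y = A^T B is decodable from C_A(x)·C_B(x) for AGE codes. -/
theorem age_important_garbage_disjoint (s t lam : ℕ) (hs : 1 ≤ s) (ht : 1 ≤ t) :
    Disjoint
      {n : ℕ | ∃ i l, i < t ∧ l < t ∧ n = (s - 1) + s * i + (t * s + lam) * l}
      {n : ℕ | ∃ i l j k, i < t ∧ l < t ∧ j < s ∧ k < s ∧ j ≠ k ∧
        n = j + s * i + (s - 1 - k) + (t * s + lam) * l} := by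
  rw [Set.disjoint_left]
  rintro n ⟨i, l, hi, hl, rfl⟩ ⟨i', l', j, k, hi', hl', hj, hk, hjk, hE⟩
  -- abbreviations
  have hθ : t * s + lam ≥ s * t := by rw [Nat.mul_comm]; omega
  have hst : s ≤ s * t := Nat.le_mul_of_pos_right s ht
  -- bounds on products with s
  have hP : s * i + s ≤ s * t := by
    have : s * (i + 1) ≤ s * t := Nat.mul_le_mul_left s (by omega)
    simpa [Nat.mul_add] using this
  have hQ : s * i' + s ≤ s * t := by
    have : s * (i' + 1) ≤ s * t := Nat.mul_le_mul_left s (by omega)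
    simpa [Nat.mul_add] using this
  -- rearranged equation
  have hE' : s - 1 + s * i + (t * s + lam) * l
      = (j + (s - 1 - k)) + s * i' + (t * s + lam) * l' := by rw [hE]; ring
  have hm : j + (s - 1 - k) ≤ 2 * s - 2 := by omega
  have hmne : j + (s - 1 - k) ≠ s - 1 := by omega
  rcases Nat.lt_trichotomy l l' with hll | hll | hll
  · -- l < l' : left side too small
    have hS : (t * s + lam) * l + (t * s + lam) ≤ (t * s + lam) * l' := by
      have : (t * s + lam) * (l + 1) ≤ (t * s + lam) * l' :=
        Nat.mul_le_mul_left _ (by omega)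
      simpa [Nat.mul_add] using this
    generalize s * i = P at *
    generalize s * i' = Q at *
    generalize s * t = T at *
    generalize (t * s + lam) * l = R at *
    generalize (t * s + lam) * l' = S at *
    omega
  · -- l = l' : residues mod s differ
    subst hll
    have hE'' : s - 1 + s * i = (j + (s - 1 - k)) + s * i' := by omega
    rcases Nat.lt_trichotomy i i' with hii | hii | hii
    · have : s * i + s ≤ s * i' := by
        have : s * (i + 1) ≤ s * i' := Nat.mul_le_mul_left s (by omega)
        simpa [Nat.mul_add] using this
      omega
    · subst hii; omega
    · have : s * i' + s ≤ s * i := by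
        have : s * (i' + 1) ≤ s * i := Nat.mul_le_mul_left s (by omega)
        simpa [Nat.mul_add] using this
      omega
  · -- l' < l
    rcases Nat.lt_or_ge l (l' + 2) with h2 | h2
    · -- l = l' + 1
      have hle : l = l' + 1 := by omega
      subst hle
      have hR : (t * s + lam) * (l' + 1) = (t * s + lam) * l' + (t * s + lam) := by
        ring
      generalize s * i = P at *
      generalize s * i' = Q at *
      generalize s * t = T at *
      generalize (t * s + lam) * (l' + 1) = R at *
      generalize (t * s + lam) * l' = S at *
      omega
    · -- l ≥ l' + 2
      have hS : (t * s + lam) * l' + 2 * (t * s + lam) ≤ (t * s + lam) * l := by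
        have : (t * s + lam) * (l' + 2) ≤ (t * s + lam) * l :=
          Nat.mul_le_mul_left _ (by omega)
        calc (t * s + lam) * l' + 2 * (t * s + lam)
            = (t * s + lam) * (l' + 2) := by ring
          _ ≤ (t * s + lam) * l := this
      generalize s * i = P at *
      generalize s * i' = Q at *
      generalize s * t = T at *
      generalize (t * s + lam) * l = R at *
      generalize (t * s + lam) * l' = S at *
      omega
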